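/- Let D be a finite set, R ⊆ D^n a nonempty n-ary relation, 𝒟 = 𝒟(R) the digraph constructed from R, and k ≥ 1. Then D^k ⊆ Δ_k and R^k ⊆ Δ_k, where Δ_k is the weakly connected component of the direct power 𝒟^k containing the diagonal. -/

import Mathlib

open scoped NNRat

/-- A homomorphism between digraphs given by their edge relations. -/
def IsDigraphHom {V₁ V₂ : Type*} (E₁ : V₁ → V₁ → Prop) (E₂ : V₂ → V₂ → Prop)
    (h : V₁ → V₂) : Prop :=
  ∀ a b, E₁ a b → E₂ (h a) (h b)

/-- Weak reachability (connectivity by oriented paths) in a digraph. -/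
def WeakReach {V : Type*} (E : V → V → Prop) : V → V → Prop :=
  Relation.ReflTransGen fun a b => E a b ∨ E b a

/-- Edge relation of the direct power of a digraph. -/
def powEdge {V : Type*} (k : ℕ) (E : V → V → Prop) :
    (Fin k → V) → (Fin k → V) → Prop :=
  fun c d => ∀ i, E (c i) (d i)

/-- The directions of the edges of the oriented path `Q_S`: a single edge, then for
each `l` a single edge (if `l ∈ S`) or a zigzag (otherwise), then a single edge. -/
def QDirs (n : ℕ) (S : Finset (Fin n)) : List Bool :=
  true :: (((List.finRange n).flatMap fun l =>
    if l ∈ S then [true] else [true, false, true]) ++ [true])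

/-- The edge relation of the oriented path whose edge directions are given by `ds`;
its vertices are `0, …, ds.length`, `0` being initial and `ds.length` terminal. -/
def pathEdge (ds : List Bool) : Fin (ds.length + 1) → Fin (ds.length + 1) → Prop :=
  fun a b => ∃ i : Fin ds.length,
    if ds.get i = true then a = i.castSucc ∧ b = i.succ
    else a = i.succ ∧ b = i.castSucc

/-- The directions of the path `Q_{{i : d = r i}}` replacing the edge `(d, r)`. -/
def pathDirs {D : Type} [DecidableEq D] {n : ℕ} (d : D) (r : Fin n → D) : List Bool :=
  QDirs n (Finset.univ.filter fun i => d = r i)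

/-- Internal vertices of the copies of the paths `Q_{{i : d = r i}}` in `𝒟(R)`. -/
structure InnerVert (D : Type) [DecidableEq D] (n : ℕ) (R : Set (Fin n → D)) where
  d : D
  r : Fin n → D
  hr : r ∈ R
  j : ℕ
  hj0 : 0 < j
  hjlen : j < (pathDirs d r).length

/-- The vertex set of the digraph `𝒟(R)`: base vertices `D`, top vertices `R`, and
the internal vertices of the connecting oriented paths. -/
def DVert (D : Type) [DecidableEq D] (n : ℕ) (R : Set (Fin n → D)) : Type :=
  D ⊕ ({t : Fin n → D // t ∈ R} ⊕ InnerVert D n R)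

/-- The `j`-th vertex of the copy of the path `Q_{{i : d = t i}}` joining `d` to `t`. -/
def pathVert {D : Type} [DecidableEq D] {n : ℕ} {R : Set (Fin n → D)}
    (d : D) (t : Fin n → D) (ht : t ∈ R) (j : ℕ) : DVert D n R :=
  if hj0 : j = 0 then Sum.inl d
  else if hjl : (pathDirs d t).length ≤ j then Sum.inr (Sum.inl ⟨t, ht⟩)
  else Sum.inr (Sum.inr ⟨d, t, ht, j, Nat.pos_of_ne_zero hj0, not_le.mp hjl⟩)

/-- The edge relation of the digraph `𝒟(R)`. -/
def DEdge {D : Type} [DecidableEq D] {n : ℕ} {R : Set (Fin n → D)} :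
    DVert D n R → DVert D n R → Prop :=
  fun a b => ∃ (d : D) (t : Fin n → D) (ht : t ∈ R) (i : ℕ)
      (hi : i < (pathDirs d t).length),
    if (pathDirs d t).get ⟨i, hi⟩ = true then
      a = pathVert d t ht i ∧ b = pathVert d t ht (i + 1)
    else
      a = pathVert d t ht (i + 1) ∧ b = pathVert d t ht i

/-- A unary polymorphism of an `n`-ary relation `R`. -/
def IsUnaryPolymorphism {D : Type} {n : ℕ} (R : Set (Fin n → D)) (g : D → D) : Prop :=
  ∀ t ∈ R, (fun i => g (t i)) ∈ R

/-- The unary cost function `u` on the vertices of `𝒟(R)` associated to `ρ : R → ℚ≥0`. -/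
def uFun {D : Type} [DecidableEq D] {n : ℕ} {R : Set (Fin n → D)}
    (ρ : {t : Fin n → D // t ∈ R} → ℚ≥0) : DVert D n R → ℚ≥0 :=
  fun v => match v with
  | Sum.inl _ => 0
  | Sum.inr (Sum.inl t) => ρ t
  | Sum.inr (Sum.inr _) => 0

section AuxForStatement8

lemma weakReach_symm {V : Type*} {E : V → V → Prop} {a b : V} (h : WeakReach E a b) :
    WeakReach E b a :=
  by
    induction h with
    | refl => exact .refl
    | tail _ hs ih => exact Relation.ReflTransGen.head hs.symm ih

lemma weakReach_proj {V : Type*} {k : ℕ} {E : V → V → Prop} {a b : Fin k → V}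
    (h : WeakReach (powEdge k E) a b) (i : Fin k) : WeakReach E (a i) (b i) := by
  induction h with
  | refl => exact .refl
  | tail _ hstep ih => exact ih.tail (hstep.imp (fun h' => h' i) (fun h' => h' i))

lemma weakReach_const {V : Type*} (k : ℕ) {E : V → V → Prop} {a b : V}
    (h : WeakReach E a b) :
    WeakReach (powEdge k E) (fun _ => a) (fun _ => b) := by
  induction h with
  | refl => exact .refl
  | tail _ hstep ih => exact ih.tail (hstep.imp (fun h' _ => h') (fun h' _ => h'))

lemma getElem_idx_congr {α : Type*} (l : List α) {i j : ℕ} (h : i = j) (hi : i < l.length) :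
    l[i]'hi = l[j]'(h ▸ hi) := by subst h; rfl

variable {D : Type} [DecidableEq D] {n : ℕ} {R : Set (Fin n → D)}

/-- The directions of the `l`-th block of the path `Q` joining `d` to `t`. -/
def blk (d : D) (t : Fin n → D) (l : Fin n) : List Bool :=
  if d = t l then [true] else [true, false, true]

/-- Cumulative length of the first `l` blocks. -/
def cum (d : D) (t : Fin n → D) (l : ℕ) : ℕ :=
  (((List.finRange n).take l).flatMap (blk d t)).length

lemma pathDirs_eq (d : D) (t : Fin n → D) :
    pathDirs d t = true :: ((List.finRange n).flatMap (blk d t) ++ [true]) := by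
  have h : (fun l : Fin n => if l ∈ Finset.univ.filter (fun i => d = t i) then [true]
      else ([true, false, true] : List Bool)) = blk d t := by
    funext l; simp [blk]
  unfold pathDirs QDirs
  rw [h]

lemma cum_succ (d : D) (t : Fin n → D) {l : ℕ} (hl : l < n) :
    cum d t (l + 1) = cum d t l + (blk d t ⟨l, hl⟩).length := by
  unfold cum
  rw [List.take_succ, List.getElem?_eq_getElem (by simpa using hl), List.getElem_finRange,
    List.flatMap_append]
  simp [Fin.cast_mk]

lemma cum_top (d : D) (t : Fin n → D) :
    cum d t n = ((List.finRange n).flatMap (blk d t)).length := by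
  unfold cum; rw [List.take_of_length_le (by simp)]

lemma length_pathDirs (d : D) (t : Fin n → D) :
    (pathDirs d t).length = cum d t n + 2 := by
  rw [pathDirs_eq, cum_top]; simp

lemma body_split (d : D) (t : Fin n → D) {l : ℕ} (hl : l < n) :
    (List.finRange n).flatMap (blk d t)
      = ((List.finRange n).take l).flatMap (blk d t)
        ++ (blk d t ⟨l, hl⟩ ++ ((List.finRange n).drop (l + 1)).flatMap (blk d t)) := by
  conv_lhs => rw [← List.take_append_drop l (List.finRange n)]
  rw [List.flatMap_append, List.drop_eq_getElem_cons (by simpa using hl), List.flatMap_cons,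
    List.getElem_finRange]
  rfl

lemma cum_le_cum (d : D) (t : Fin n → D) {l : ℕ} (hl : l < n) :
    cum d t l + (blk d t ⟨l, hl⟩).length ≤ cum d t n := by
  rw [cum_top, body_split d t hl]
  simp only [List.length_append]
  have hA : (((List.finRange n).take l).flatMap (blk d t)).length = cum d t l := rfl
  omega

lemma body_get (d : D) (t : Fin n → D) {l : ℕ} (hl : l < n) {off : ℕ}
    (hoff : off < (blk d t ⟨l, hl⟩).length) :
    ∃ h : cum d t l + off < ((List.finRange n).flatMap (blk d t)).length,
      ((List.finRange n).flatMap (blk d t))[cum d t l + off]'h = (blk d t ⟨l, hl⟩)[off] := by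
  have hb : cum d t l + off < cum d t n := by
    have := cum_le_cum d t hl; omega
  have hlen : cum d t l + off < ((List.finRange n).flatMap (blk d t)).length := by
    rw [← cum_top]; exact hb
  refine ⟨hlen, ?_⟩
  rw [List.getElem_of_eq (body_split d t hl),
    List.getElem_append_right
      (show (((List.finRange n).take l).flatMap (blk d t)).length ≤ cum d t l + off from
        Nat.le_add_right _ _),
    getElem_idx_congr _
      (show cum d t l + off - (((List.finRange n).take l).flatMap (blk d t)).length = off from
        Nat.add_sub_cancel_left (cum d t l) off),
    List.getElem_append_left hoff]

lemma dirs_block (d : D) (t : Fin n → D) {l : ℕ} (hl : l < n) {off : ℕ}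
    (hoff : off < (blk d t ⟨l, hl⟩).length) :
    ∃ h : cum d t l + off + 1 < (pathDirs d t).length,
      (pathDirs d t).get ⟨cum d t l + off + 1, h⟩ = (blk d t ⟨l, hl⟩)[off] := by
  obtain ⟨hb, hval⟩ := body_get d t hl hoff
  have hbn : cum d t l + off < cum d t n := by rw [cum_top]; exact hb
  have hlen : cum d t l + off + 1 < (pathDirs d t).length := by
    rw [length_pathDirs]; omega
  refine ⟨hlen, ?_⟩
  rw [List.get_eq_getElem, List.getElem_of_eq (pathDirs_eq d t), List.getElem_cons_succ,
    List.getElem_append_left hb]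
  exact hval

lemma dirs_zero (d : D) (t : Fin n → D) :
    ∃ h : 0 < (pathDirs d t).length, (pathDirs d t).get ⟨0, h⟩ = true := by
  refine ⟨by rw [length_pathDirs]; omega, ?_⟩
  rw [List.get_eq_getElem, List.getElem_of_eq (pathDirs_eq d t)]
  rfl

lemma dirs_last (d : D) (t : Fin n → D) :
    ∃ h : cum d t n + 1 < (pathDirs d t).length, (pathDirs d t).get ⟨cum d t n + 1, h⟩ = true := by
  refine ⟨by rw [length_pathDirs]; omega, ?_⟩
  rw [List.get_eq_getElem, List.getElem_of_eq (pathDirs_eq d t), List.getElem_cons_succ]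
  exact List.getElem_concat_length (cum_top d t) _

lemma pathVert_zero (d : D) (t : Fin n → D) (ht : t ∈ R) :
    pathVert d t ht 0 = Sum.inl d := by
  simp [pathVert]; rfl

lemma pathVert_top (d : D) (t : Fin n → D) (ht : t ∈ R) {j : ℕ} (hj0 : j ≠ 0)
    (hj : (pathDirs d t).length ≤ j) :
    pathVert d t ht j = Sum.inr (Sum.inl ⟨t, ht⟩) := by
  simp [pathVert, hj0, hj]; rfl

lemma edgeT (d : D) (t : Fin n → D) (ht : t ∈ R) {i : ℕ} (hi : i < (pathDirs d t).length)
    (h : (pathDirs d t).get ⟨i, hi⟩ = true) :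
    DEdge (pathVert d t ht i) (pathVert d t ht (i + 1)) :=
  ⟨d, t, ht, i, hi, by rw [if_pos h]; exact ⟨rfl, rfl⟩⟩

lemma edgeF (d : D) (t : Fin n → D) (ht : t ∈ R) {i : ℕ} (hi : i < (pathDirs d t).length)
    (h : (pathDirs d t).get ⟨i, hi⟩ = false) :
    DEdge (pathVert d t ht (i + 1)) (pathVert d t ht i) :=
  ⟨d, t, ht, i, hi, by rw [if_neg (by rw [h]; simp)]; exact ⟨rfl, rfl⟩⟩

lemma blk_length_pos (d : D) (t : Fin n → D) (l : Fin n) : 0 < (blk d t l).length := by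
  by_cases hc : d = t l <;> simp [blk, hc]

lemma edge_seg1 (d : D) (t : Fin n → D) (ht : t ∈ R) {l : ℕ} (hl : l < n) :
    DEdge (pathVert d t ht (cum d t l + 1)) (pathVert d t ht (cum d t l + 2)) := by
  obtain ⟨h, hval⟩ := dirs_block d t hl (blk_length_pos d t ⟨l, hl⟩)
  have hv : (pathDirs d t).get ⟨cum d t l + 0 + 1, h⟩ = true := by
    rw [hval]
    by_cases hc : d = t ⟨l, hl⟩ <;> simp [blk, hc]
  exact edgeT d t ht h hv

lemma edge_seg2 (d : D) (t : Fin n → D) (ht : t ∈ R) {l : ℕ} (hl : l < n)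
    (hc : ¬ d = t ⟨l, hl⟩) :
    DEdge (pathVert d t ht (cum d t l + 3)) (pathVert d t ht (cum d t l + 2)) := by
  have hoff : 1 < (blk d t ⟨l, hl⟩).length := by simp [blk, hc]
  obtain ⟨h, hval⟩ := dirs_block d t hl hoff
  have hv : (pathDirs d t).get ⟨cum d t l + 1 + 1, h⟩ = false := by
    rw [hval]; simp [blk, hc]
  exact edgeF d t ht h hv

lemma edge_seg3 (d : D) (t : Fin n → D) (ht : t ∈ R) {l : ℕ} (hl : l < n)
    (hc : ¬ d = t ⟨l, hl⟩) :
    DEdge (pathVert d t ht (cum d t l + 3)) (pathVert d t ht (cum d t l + 4)) := by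
  have hoff : 2 < (blk d t ⟨l, hl⟩).length := by simp [blk, hc]
  obtain ⟨h, hval⟩ := dirs_block d t hl hoff
  have hv : (pathDirs d t).get ⟨cum d t l + 2 + 1, h⟩ = true := by
    rw [hval]; simp [blk, hc]
  exact edgeT d t ht h hv

lemma edge_start (d : D) (t : Fin n → D) (ht : t ∈ R) :
    DEdge (Sum.inl d : DVert D n R) (pathVert d t ht 1) := by
  obtain ⟨h0, hv⟩ := dirs_zero d t
  have := edgeT d t ht h0 hv
  rwa [pathVert_zero] at this

lemma edge_end (d : D) (t : Fin n → D) (ht : t ∈ R) :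
    DEdge (pathVert d t ht (cum d t n + 1)) (Sum.inr (Sum.inl ⟨t, ht⟩) : DVert D n R) := by
  obtain ⟨h, hv⟩ := dirs_last d t
  have h2 := edgeT d t ht h hv
  rwa [pathVert_top d t ht (j := cum d t n + 1 + 1) (by omega) (by rw [length_pathDirs])] at h2

lemma walk_main {k : ℕ} (d : Fin k → D) (t : Fin k → (Fin n → D)) (ht : ∀ i, t i ∈ R) :
    WeakReach (powEdge k DEdge) (fun i => (Sum.inl (d i) : DVert D n R))
      (fun i => Sum.inr (Sum.inl ⟨t i, ht i⟩)) := by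
  have main : ∀ l, l ≤ n → WeakReach (powEdge k DEdge)
      (fun i => (Sum.inl (d i) : DVert D n R))
      (fun i => pathVert (d i) (t i) (ht i) (cum (d i) (t i) l + 1)) := by
    intro l
    induction l with
    | zero =>
      intro _
      exact Relation.ReflTransGen.single (Or.inl fun i => edge_start (d i) (t i) (ht i))
    | succ l ih =>
      intro hln
      have hl : l < n := hln
      refine (ih (le_of_lt hl)).trans ?_
      have h1 : powEdge k DEdge
          (fun i => pathVert (d i) (t i) (ht i) (cum (d i) (t i) l + 1))
          (fun i => pathVert (d i) (t i) (ht i) (cum (d i) (t i) l + 2)) :=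
        fun i => edge_seg1 (d i) (t i) (ht i) hl
      have h2 : powEdge k DEdge
          (fun i => if d i = t i ⟨l, hl⟩ then pathVert (d i) (t i) (ht i) (cum (d i) (t i) l + 1)
            else pathVert (d i) (t i) (ht i) (cum (d i) (t i) l + 3))
          (fun i => pathVert (d i) (t i) (ht i) (cum (d i) (t i) l + 2)) := by
        intro i
        dsimp only
        by_cases hc : d i = t i ⟨l, hl⟩
        · rw [if_pos hc]; exact edge_seg1 (d i) (t i) (ht i) hl
        · rw [if_neg hc]; exact edge_seg2 (d i) (t i) (ht i) hl hc
      have h3 : powEdge k DEdge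
          (fun i => if d i = t i ⟨l, hl⟩ then pathVert (d i) (t i) (ht i) (cum (d i) (t i) l + 1)
            else pathVert (d i) (t i) (ht i) (cum (d i) (t i) l + 3))
          (fun i => pathVert (d i) (t i) (ht i) (cum (d i) (t i) (l + 1) + 1)) := by
        intro i
        dsimp only
        have hcum := cum_succ (d i) (t i) hl
        by_cases hc : d i = t i ⟨l, hl⟩
        · have hb : (blk (d i) (t i) ⟨l, hl⟩).length = 1 := by simp [blk, hc]
          have he : cum (d i) (t i) (l + 1) + 1 = cum (d i) (t i) l + 2 := by omega
          rw [if_pos hc, he]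
          exact edge_seg1 (d i) (t i) (ht i) hl
        · have hb : (blk (d i) (t i) ⟨l, hl⟩).length = 3 := by simp [blk, hc]
          have he : cum (d i) (t i) (l + 1) + 1 = cum (d i) (t i) l + 4 := by omega
          rw [if_neg hc, he]
          exact edge_seg3 (d i) (t i) (ht i) hl hc
      exact Relation.ReflTransGen.head (Or.inl h1)
        (Relation.ReflTransGen.head (Or.inr h2)
          (Relation.ReflTransGen.single (Or.inl h3)))
  refine (main n (le_refl n)).trans ?_
  exact Relation.ReflTransGen.single (Or.inl fun i => edge_end (d i) (t i) (ht i))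

lemma pathVert_adj (d : D) (t : Fin n → D) (ht : t ∈ R) {m : ℕ}
    (hm : m < (pathDirs d t).length) :
    WeakReach (DEdge (R := R)) (pathVert d t ht m) (pathVert d t ht (m + 1)) := by
  cases hv : (pathDirs d t).get ⟨m, hm⟩ with
  | false => exact Relation.ReflTransGen.single (Or.inr (edgeF d t ht hm hv))
  | true => exact Relation.ReflTransGen.single (Or.inl (edgeT d t ht hm hv))

lemma reach_pathVert (d : D) (t : Fin n → D) (ht : t ∈ R) (j : ℕ) :
    WeakReach (DEdge (R := R)) (Sum.inl d) (pathVert d t ht j) := by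
  induction j with
  | zero => rw [pathVert_zero]; exact Relation.ReflTransGen.refl
  | succ j ih =>
    by_cases hm : j < (pathDirs d t).length
    · exact ih.trans (pathVert_adj d t ht hm)
    · have hlen : (pathDirs d t).length = cum d t n + 2 := length_pathDirs d t
      have hjeq : pathVert d t ht j = pathVert d t ht (j + 1) := by
        rw [pathVert_top d t ht (by omega) (by omega),
          pathVert_top d t ht (by omega) (by omega)]
      rwa [hjeq] at ih

end AuxForStatement8

/-- in the direct power `𝒟(R)^k`, the diagonal lies in one weakly
connected component `Δ_k`, and `D^k ⊆ Δ_k` and `R^k ⊆ Δ_k`. -/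
theorem diag_component_contains_Dk_Rk {D : Type} [Fintype D] [DecidableEq D] {n : ℕ}
    (hn : 1 ≤ n) (R : Set (Fin n → D)) (hR : R.Nonempty) (k : ℕ) (hk : 1 ≤ k) :
    (∀ v w : DVert D n R,
      WeakReach (powEdge k DEdge) (fun _ => v) (fun _ => w)) ∧
    (∀ c : Fin k → D, ∃ v : DVert D n R,
      WeakReach (powEdge k DEdge) (fun _ => v) (fun i => Sum.inl (c i))) ∧
    (∀ r : Fin k → {t : Fin n → D // t ∈ R}, ∃ v : DVert D n R,
      WeakReach (powEdge k DEdge) (fun _ => v) (fun i => Sum.inr (Sum.inl (r i)))) := by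
  obtain ⟨t₀, ht₀⟩ := hR
  have hub : ∀ dd : D, WeakReach (DEdge (R := R)) (Sum.inl dd)
      (Sum.inr (Sum.inl ⟨t₀, ht₀⟩)) := fun dd =>
    weakReach_proj (walk_main (k := 1) (fun _ => dd) (fun _ => t₀) (fun _ => ht₀)) 0
  have hall : ∀ v : DVert D n R,
      WeakReach DEdge v (Sum.inr (Sum.inl ⟨t₀, ht₀⟩)) := by
    intro v
    match v with
    | Sum.inl dd => exact hub dd
    | Sum.inr (Sum.inl s) =>
      have h1 : WeakReach (DEdge (R := R)) (Sum.inl (t₀ ⟨0, hn⟩)) (Sum.inr (Sum.inl s)) :=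
        weakReach_proj
          (walk_main (k := 1) (fun _ => t₀ ⟨0, hn⟩) (fun _ => s.1) (fun _ => s.2)) 0
      exact (weakReach_symm h1).trans (hub _)
    | Sum.inr (Sum.inr iv) =>
      obtain ⟨dd, tt, htt, j, hj0, hjl⟩ := iv
      have hpv : pathVert dd tt htt j
          = (Sum.inr (Sum.inr ⟨dd, tt, htt, j, hj0, hjl⟩) : DVert D n R) := by
        unfold pathVert
        exact (dif_neg (show ¬ j = 0 by omega)).trans
          (dif_neg (show ¬ (pathDirs dd tt).length ≤ j by omega))
      have h1 := reach_pathVert dd tt htt j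
      rw [hpv] at h1
      exact (weakReach_symm h1).trans (hub dd)
  refine ⟨?_, ?_, ?_⟩
  · intro v w
    exact weakReach_const k ((hall v).trans (weakReach_symm (hall w)))
  · intro c
    exact ⟨Sum.inr (Sum.inl ⟨t₀, ht₀⟩),
      weakReach_symm (walk_main c (fun _ => t₀) (fun _ => ht₀))⟩
  · intro r
    exact ⟨Sum.inl (t₀ ⟨0, hn⟩),
      walk_main (fun _ => t₀ ⟨0, hn⟩) (fun i => (r i).1) (fun i => (r i).2)⟩
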